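/- If f, g : [a,b] → ℝ with a, b ∈ [0,∞), a < b, g and f·g integrable on [a,b], f is s₁-convex and g is s₂-convex in the second sense on [a,b] for some fixed s₁, s₂ ∈ (0,1), then (1/(b-a)) ∫_a^b f(x)g(x) dx ≤ (1/(s₁+s₂+1))·(f(a)g(a)+f(b)g(b)) + B(s₁+1, s₂+1)·(f(a)g(b)+f(b)g(a)), where B denotes the Euler Beta function. -/

import Mathlib

open MeasureTheory Set

theorem product_hadamard_sconvex_sconvex
    (a b s₁ s₂ : ℝ) (f g : ℝ → ℝ)
    (ha : 0 ≤ a) (hb : 0 ≤ b) (hab : a < b)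
    (hs₁ : s₁ ∈ Set.Ioo (0:ℝ) 1) (hs₂ : s₂ ∈ Set.Ioo (0:ℝ) 1)
    (hg : IntervalIntegrable g volume a b)
    (hfg : IntervalIntegrable (fun x => f x * g x) volume a b)
    (hfs : ∀ x ∈ Set.Icc a b, ∀ y ∈ Set.Icc a b, ∀ l ∈ Set.Icc (0:ℝ) 1,
      f (l * x + (1 - l) * y) ≤ l ^ s₁ * f x + (1 - l) ^ s₁ * f y)
    (hgs : ∀ x ∈ Set.Icc a b, ∀ y ∈ Set.Icc a b, ∀ l ∈ Set.Icc (0:ℝ) 1,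
      g (l * x + (1 - l) * y) ≤ l ^ s₂ * g x + (1 - l) ^ s₂ * g y) :
    (1 / (b - a)) * ∫ x in a..b, f x * g x ≤
      (1 / (s₁ + s₂ + 1)) * (f a * g a + f b * g b) +
        (∫ t in (0:ℝ)..1, t ^ ((s₁ + 1) - 1) * (1 - t) ^ ((s₂ + 1) - 1)) *
          (f a * g b + f b * g a) := by
  obtain ⟨hs₁0, hs₁1⟩ := hs₁
  obtain ⟨hs₂0, hs₂1⟩ := hs₂
  have half : (1/2:ℝ) ∈ Set.Icc (0:ℝ) 1 := by norm_num
  -- nonnegativity of s-convex functions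
  have hnon : ∀ (s : ℝ) (F : ℝ → ℝ), s < 1 →
      (∀ x ∈ Set.Icc a b, ∀ y ∈ Set.Icc a b, ∀ l ∈ Set.Icc (0:ℝ) 1,
        F (l * x + (1 - l) * y) ≤ l ^ s * F x + (1 - l) ^ s * F y) →
      ∀ x ∈ Set.Icc a b, 0 ≤ F x := by
    intro s F hs1 hF x hx
    have h := hF x hx x hx (1/2) half
    rw [show (1/2:ℝ) * x + (1 - 1/2) * x = x by ring] at h
    have hc : (1/2:ℝ) < (1/2:ℝ) ^ s := by
      have := Real.rpow_lt_rpow_of_exponent_gt (by norm_num : (0:ℝ) < 1/2)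
        (by norm_num : (1/2:ℝ) < 1) hs1
      simpa using this
    rw [show (1 - 1/2 : ℝ) = 1/2 by norm_num] at h
    nlinarith
  have hf0 := hnon s₁ f hs₁1 hfs
  have hg0 := hnon s₂ g hs₂1 hgs
  have haI : a ∈ Set.Icc a b := ⟨le_refl a, hab.le⟩
  have hbI : b ∈ Set.Icc a b := ⟨hab.le, le_refl b⟩
  have hfa := hf0 a haI
  have hfb := hf0 b hbI
  have hga := hg0 a haI
  have hgb := hg0 b hbI
  have hba : (b - a : ℝ) ≠ 0 := sub_ne_zero.2 hab.ne'
  have hab' : (a - b : ℝ) ≠ 0 := sub_ne_zero.2 hab.ne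
  set F : ℝ → ℝ := fun x => f x * g x with hFdef
  -- substitution x = (a-b)t + b
  have key : (1/(b-a)) * ∫ x in a..b, F x = ∫ t in (0:ℝ)..1, F ((a-b)*t + b) := by
    rw [intervalIntegral.integral_comp_mul_add F hab' b]
    rw [show (a-b)*0 + b = b by ring, show (a-b)*1 + b = a by ring]
    rw [intervalIntegral.integral_symm]
    rw [smul_eq_mul]
    field_simp
    ring
  -- integrability of the composed function
  have compInt : IntervalIntegrable (fun t => F ((a-b)*t + b)) volume 0 1 := by
    have h1 : IntervalIntegrable (fun x => F (x + b)) volume (a - b) (b - b) :=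
      hfg.comp_add_right b
    have h2 := h1.comp_mul_left (c := a - b)
    rw [div_self hab', sub_self, zero_div] at h2
    exact h2.symm
  -- pointwise bound
  have hcont1 : Continuous fun t : ℝ => t ^ s₁ := Real.continuous_rpow_const hs₁0.le
  have hcont1' : Continuous fun t : ℝ => (1 - t) ^ s₁ :=
    hcont1.comp (continuous_const.sub continuous_id)
  have hcont2 : Continuous fun t : ℝ => t ^ s₂ := Real.continuous_rpow_const hs₂0.le
  have hcont2' : Continuous fun t : ℝ => (1 - t) ^ s₂ :=
    hcont2.comp (continuous_const.sub continuous_id)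
  have hcont12 : Continuous fun t : ℝ => t ^ (s₁ + s₂) :=
    Real.continuous_rpow_const (by linarith)
  have hcont12' : Continuous fun t : ℝ => (1 - t) ^ (s₁ + s₂) :=
    hcont12.comp (continuous_const.sub continuous_id)
  have contR : Continuous (fun t : ℝ =>
      (t ^ s₁ * f a + (1 - t) ^ s₁ * f b) * (t ^ s₂ * g a + (1 - t) ^ s₂ * g b)) :=
    ((hcont1.mul continuous_const).add (hcont1'.mul continuous_const)).mul
      ((hcont2.mul continuous_const).add (hcont2'.mul continuous_const))
  have hmono : (∫ t in (0:ℝ)..1, F ((a-b)*t + b)) ≤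
      ∫ t in (0:ℝ)..1, (t ^ s₁ * f a + (1 - t) ^ s₁ * f b) *
        (t ^ s₂ * g a + (1 - t) ^ s₂ * g b) := by
    apply intervalIntegral.integral_mono_on (by norm_num) compInt (contR.intervalIntegrable 0 1)
    intro t ht
    obtain ⟨ht0, ht1⟩ := ht
    have hxt : (a - b) * t + b = t * a + (1 - t) * b := by ring
    have hmem : (a - b) * t + b ∈ Set.Icc a b := by
      constructor <;> nlinarith
    have hf1 : f ((a-b)*t + b) ≤ t ^ s₁ * f a + (1 - t) ^ s₁ * f b := by
      rw [hxt]; exact hfs a haI b hbI t ⟨ht0, ht1⟩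
    have hg1 : g ((a-b)*t + b) ≤ t ^ s₂ * g a + (1 - t) ^ s₂ * g b := by
      rw [hxt]; exact hgs a haI b hbI t ⟨ht0, ht1⟩
    have hgpt : 0 ≤ g ((a-b)*t + b) := hg0 _ hmem
    have hR1 : 0 ≤ t ^ s₁ * f a + (1 - t) ^ s₁ * f b :=
      add_nonneg (mul_nonneg (Real.rpow_nonneg ht0 _) hfa)
        (mul_nonneg (Real.rpow_nonneg (by linarith) _) hfb)
    exact mul_le_mul hf1 hg1 hgpt hR1
  -- expand the product inside the integral
  have hexpand : (∫ t in (0:ℝ)..1, (t ^ s₁ * f a + (1 - t) ^ s₁ * f b) *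
        (t ^ s₂ * g a + (1 - t) ^ s₂ * g b)) =
      ∫ t in (0:ℝ)..1, (t ^ (s₁ + s₂) * (f a * g a) + (1 - t) ^ (s₁ + s₂) * (f b * g b)
        + t ^ s₁ * (1 - t) ^ s₂ * (f a * g b) + t ^ s₂ * (1 - t) ^ s₁ * (f b * g a)) := by
    apply intervalIntegral.integral_congr
    intro t ht
    rw [Set.uIcc_of_le (by norm_num : (0:ℝ) ≤ 1)] at ht
    obtain ⟨ht0, ht1⟩ := ht
    have e1 : t ^ (s₁ + s₂) = t ^ s₁ * t ^ s₂ :=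
      Real.rpow_add' ht0 (by positivity)
    have e2 : (1 - t) ^ (s₁ + s₂) = (1 - t) ^ s₁ * (1 - t) ^ s₂ :=
      Real.rpow_add' (by linarith) (by positivity)
    simp only [e1, e2]
    ring
  -- integrate term by term
  have i1 : IntervalIntegrable (fun t : ℝ => t ^ (s₁ + s₂) * (f a * g a)) volume 0 1 :=
    (hcont12.mul continuous_const).intervalIntegrable _ _
  have i2 : IntervalIntegrable (fun t : ℝ => (1 - t) ^ (s₁ + s₂) * (f b * g b)) volume 0 1 :=
    (hcont12'.mul continuous_const).intervalIntegrable _ _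
  have i3 : IntervalIntegrable (fun t : ℝ => t ^ s₁ * (1 - t) ^ s₂ * (f a * g b)) volume 0 1 :=
    ((hcont1.mul hcont2').mul continuous_const).intervalIntegrable _ _
  have i4 : IntervalIntegrable (fun t : ℝ => t ^ s₂ * (1 - t) ^ s₁ * (f b * g a)) volume 0 1 :=
    ((hcont2.mul hcont1').mul continuous_const).intervalIntegrable _ _
  have hsplit : (∫ t in (0:ℝ)..1, (t ^ (s₁ + s₂) * (f a * g a)
        + (1 - t) ^ (s₁ + s₂) * (f b * g b)
        + t ^ s₁ * (1 - t) ^ s₂ * (f a * g b) + t ^ s₂ * (1 - t) ^ s₁ * (f b * g a))) =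
      (∫ t in (0:ℝ)..1, t ^ (s₁ + s₂) * (f a * g a))
      + (∫ t in (0:ℝ)..1, (1 - t) ^ (s₁ + s₂) * (f b * g b))
      + (∫ t in (0:ℝ)..1, t ^ s₁ * (1 - t) ^ s₂ * (f a * g b))
      + (∫ t in (0:ℝ)..1, t ^ s₂ * (1 - t) ^ s₁ * (f b * g a)) := by
    rw [intervalIntegral.integral_add ((i1.add i2).add i3) i4,
        intervalIntegral.integral_add (i1.add i2) i3,
        intervalIntegral.integral_add i1 i2]
  -- compute each integral
  have hpow : (∫ t in (0:ℝ)..1, t ^ (s₁ + s₂)) = 1 / (s₁ + s₂ + 1) := by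
    rw [integral_rpow (Or.inl (by linarith))]
    rw [Real.one_rpow, Real.zero_rpow (by positivity)]
    ring
  have hpow' : (∫ t in (0:ℝ)..1, (1 - t) ^ (s₁ + s₂)) = 1 / (s₁ + s₂ + 1) := by
    have := intervalIntegral.integral_comp_sub_left (fun x : ℝ => x ^ (s₁ + s₂)) 1
      (a := 0) (b := 1)
    norm_num at this
    rw [this, hpow]
  have hsym : (∫ t in (0:ℝ)..1, t ^ s₂ * (1 - t) ^ s₁) =
      ∫ t in (0:ℝ)..1, t ^ s₁ * (1 - t) ^ s₂ := by
    have := intervalIntegral.integral_comp_sub_left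
      (fun x : ℝ => x ^ s₂ * (1 - x) ^ s₁) 1 (a := 0) (b := 1)
    norm_num at this
    rw [← this]
    apply intervalIntegral.integral_congr
    intro t _
    simp only [sub_sub_cancel]
    ring
  have hBsimp : (∫ t in (0:ℝ)..1, t ^ ((s₁ + 1) - 1) * (1 - t) ^ ((s₂ + 1) - 1)) =
      ∫ t in (0:ℝ)..1, t ^ s₁ * (1 - t) ^ s₂ := by
    norm_num
  -- assemble
  rw [hFdef] at key
  rw [key]
  refine le_trans hmono ?_
  rw [hexpand, hsplit, hBsimp]
  rw [intervalIntegral.integral_mul_const, intervalIntegral.integral_mul_const,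
      intervalIntegral.integral_mul_const, intervalIntegral.integral_mul_const,
      hpow, hpow', hsym]
  exact le_of_eq (by ring)
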